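/- Let R be a Noetherian ring, P a prime ideal, A = R/P, and G_• a finite complex of finitely generated free R-modules such that A ⊗_R G_• is acyclic. If H is an R-module that is a direct limit of modules each having a finite filtration with A-flat factors, then H ⊗_R G_• is acyclic. -/

import Mathlib

/-!
STATEMENT 12.  `R` Noetherian, `P` prime, `A = R/P`.  `G_•` is a finite complex
of finitely generated free `R`-modules (encoded as `G k = Fin (b k) → R` with
differentials `d k : G (k+1) → G k`, `d ∘ d = 0`, and `d k = 0` for `k ≥ n`)
such that `A ⊗_R G_•` is acyclic (exact in all positive degrees).  If `H` is a
direct limit of `R`-modules each of which has a finite filtration whose factors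
are flat `A`-modules, then `H ⊗_R G_•` is acyclic.
-/

open scoped TensorProduct

universe u v

set_option maxHeartbeats 1000000
set_option synthInstance.maxHeartbeats 400000

open LinearMap

section Helpers

/-- Transfer exactness along a ladder of bijections (function level). -/
lemma exact_of_ladder' {A1 A2 A3 B1 B2 B3 : Type*}
    [Zero A3] [Zero B3]
    (e1 : A1 → B1) (e2 : A2 → B2) (e3 : A3 → B3)
    (he1 : Function.Surjective e1) (he2 : Function.Bijective e2)
    (he3 : Function.Injective e3) (he3z : e3 0 = 0)
    {f : A1 → A2} {g : A2 → A3} {f' : B1 → B2} {g' : B2 → B3}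
    (h1 : ∀ x, f' (e1 x) = e2 (f x)) (h2 : ∀ x, g' (e2 x) = e3 (g x))
    (h : Function.Exact f g) : Function.Exact f' g' := by
  intro y
  obtain ⟨x2, rfl⟩ := he2.2 y
  rw [h2]
  constructor
  · intro h0
    obtain ⟨x, hx⟩ := (h x2).mp (he3 (by rw [h0, he3z]))
    exact ⟨e1 x, by rw [h1, hx]⟩
  · rintro ⟨z, hz⟩
    obtain ⟨x1, rfl⟩ := he1 z
    rw [h1] at hz
    rw [← he2.1 hz, h.apply_apply_eq_zero, he3z]

/-- Transfer exactness of a tensored pair along an equivalence of the coefficient module. -/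
lemma exact_lTensor_congr {R : Type u} [CommRing R] {M M' N1 N2 N3 : Type v}
    [AddCommGroup M] [Module R M] [AddCommGroup M'] [Module R M']
    [AddCommGroup N1] [Module R N1] [AddCommGroup N2] [Module R N2]
    [AddCommGroup N3] [Module R N3]
    (e : M ≃ₗ[R] M') (d1 : N1 →ₗ[R] N2) (d2 : N2 →ₗ[R] N3)
    (h : Function.Exact (lTensor M d1) (lTensor M d2)) :
    Function.Exact (lTensor M' d1) (lTensor M' d2) := by
  have key : ∀ {P P' : Type v} [AddCommGroup P] [Module R P] [AddCommGroup P'] [Module R P']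
      (dd : P →ₗ[R] P') (x : M ⊗[R] P),
      lTensor M' dd (TensorProduct.congr e (LinearEquiv.refl R P) x)
        = TensorProduct.congr e (LinearEquiv.refl R P') (lTensor M dd x) := by
    intro P P' _ _ _ _ dd x
    induction x using TensorProduct.induction_on with
    | zero => simp
    | tmul m p => simp
    | add x y hx hy => simp [hx, hy]
  exact exact_of_ladder' ⇑(TensorProduct.congr e (LinearEquiv.refl R N1))
    ⇑(TensorProduct.congr e (LinearEquiv.refl R N2))
    ⇑(TensorProduct.congr e (LinearEquiv.refl R N3))
    (TensorProduct.congr e (LinearEquiv.refl R N1)).surjective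
    (TensorProduct.congr e (LinearEquiv.refl R N2)).bijective
    (TensorProduct.congr e (LinearEquiv.refl R N3)).injective
    (map_zero _) (fun x => key (P := N1) (P' := N2) d1 x)
    (fun x => key (P := N2) (P' := N3) d2 x) h

lemma subsingleton_tensor {R M N : Type*} [CommRing R] [AddCommGroup M] [Module R M]
    [AddCommGroup N] [Module R N] [Subsingleton M] : Subsingleton (M ⊗[R] N) := by
  have : ∀ x : M ⊗[R] N, x = 0 := by
    intro x
    induction x using TensorProduct.induction_on with
    | zero => rfl
    | tmul m p => rw [Subsingleton.elim m 0, TensorProduct.zero_tmul]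
    | add x y hx hy => rw [hx, hy, add_zero]
  exact ⟨fun a b => by rw [this a, this b]⟩

lemma exact_lTensor_of_subsingleton {R M N1 N2 N3 : Type*} [CommRing R]
    [AddCommGroup M] [Module R M] [Subsingleton M]
    [AddCommGroup N1] [Module R N1] [AddCommGroup N2] [Module R N2]
    [AddCommGroup N3] [Module R N3]
    (d1 : N1 →ₗ[R] N2) (d2 : N2 →ₗ[R] N3) :
    Function.Exact (lTensor M d1) (lTensor M d2) := by
  haveI : Subsingleton (M ⊗[R] N2) := subsingleton_tensor
  intro y
  constructor
  · intro _
    exact ⟨0, Subsingleton.elim _ _⟩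
  · intro _
    rw [Subsingleton.elim y 0, map_zero]

lemma lTensor_rTensor_comm {R M M' P P' : Type*} [CommRing R]
    [AddCommGroup M] [Module R M] [AddCommGroup M'] [Module R M']
    [AddCommGroup P] [Module R P] [AddCommGroup P'] [Module R P']
    (g : M →ₗ[R] M') (dd : P →ₗ[R] P') (x : M ⊗[R] P) :
    rTensor P' g (lTensor M dd x) = lTensor M' dd (rTensor P g x) := by
  rw [← LinearMap.comp_apply, ← LinearMap.comp_apply, rTensor_comp_lTensor,
    lTensor_comp_rTensor]

/-- Two-out-of-three for acyclicity along a short exact sequence, for tensoring with a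
complex of flat modules. -/
lemma exact_lTensor_of_ses {R M N1 N2 N3 : Type u} [CommRing R] [AddCommGroup M] [Module R M]
    [AddCommGroup N1] [Module R N1] [Module.Flat R N1]
    [AddCommGroup N2] [Module R N2] [Module.Flat R N2]
    [AddCommGroup N3] [Module R N3] [Module.Flat R N3]
    (N : Submodule R M)
    (d1 : N1 →ₗ[R] N2) (d2 : N2 →ₗ[R] N3) (hd : d2.comp d1 = 0)
    (hsub : Function.Exact (lTensor N d1) (lTensor N d2))
    (hquot : Function.Exact (lTensor (M ⧸ N) d1) (lTensor (M ⧸ N) d2)) :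
    Function.Exact (lTensor M d1) (lTensor M d2) := by
  have hdd : ∀ x : M ⊗[R] N1, lTensor M d2 (lTensor M d1 x) = 0 := by
    intro x
    rw [← LinearMap.comp_apply, ← lTensor_comp, hd, lTensor_zero, LinearMap.zero_apply]
  intro x
  constructor
  · intro hx
    have hq : lTensor (M ⧸ N) d2 (rTensor N2 N.mkQ x) = 0 := by
      rw [← lTensor_rTensor_comm, hx, map_zero]
    obtain ⟨y'', hy''⟩ := (hquot _).mp hq
    obtain ⟨y, rfl⟩ := rTensor_surjective N1 (N.mkQ_surjective) y''
    have hz0 : rTensor N2 N.mkQ (x - lTensor M d1 y) = 0 := by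
      rw [map_sub, lTensor_rTensor_comm, hy'', sub_self]
    have hcol : Function.Exact (rTensor N2 N.subtype) (rTensor N2 N.mkQ) :=
      Module.Flat.rTensor_exact N2 (LinearMap.exact_subtype_mkQ N)
    obtain ⟨z, hz⟩ := (hcol _).mp hz0
    have hinj : Function.Injective (rTensor N3 N.subtype) :=
      Module.Flat.rTensor_preserves_injective_linearMap N.subtype N.injective_subtype
    have hz2 : lTensor (↥N) d2 z = 0 := by
      apply hinj
      rw [map_zero, lTensor_rTensor_comm, hz, map_sub, hx, hdd, sub_zero]
    obtain ⟨w, hw⟩ := (hsub _).mp hz2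
    refine ⟨y + rTensor N1 N.subtype w, ?_⟩
    rw [map_add, ← lTensor_rTensor_comm, hw, hz]
    abel
  · rintro ⟨y, rfl⟩
    exact hdd y

/-- If `Q` is a flat module over the `R`-algebra `S` and `S ⊗ -` is exact on the pair,
then so is `Q ⊗ -`. -/
lemma exact_lTensor_of_flat_alg {R S : Type u} [CommRing R] [CommRing S] [Algebra R S]
    (Q : Type u) [AddCommGroup Q] [Module S Q] [Module R Q] [IsScalarTower R S Q]
    [Module.Flat S Q]
    {N1 N2 N3 : Type u} [AddCommGroup N1] [Module R N1] [AddCommGroup N2] [Module R N2]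
    [AddCommGroup N3] [Module R N3]
    (d1 : N1 →ₗ[R] N2) (d2 : N2 →ₗ[R] N3)
    (h : Function.Exact (lTensor S d1) (lTensor S d2)) :
    Function.Exact (lTensor Q d1) (lTensor Q d2) := by
  have hbc : Function.Exact (d1.baseChange S) (d2.baseChange S) := by
    show Function.Exact ⇑(d1.baseChange S) ⇑(d2.baseChange S)
    rw [d1.baseChange_eq_ltensor, d2.baseChange_eq_ltensor]
    exact h
  have hQ := Module.Flat.lTensor_exact (R := S) Q hbc
  have key : ∀ {P P' : Type u} [AddCommGroup P] [Module R P] [AddCommGroup P'] [Module R P']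
      (dd : P →ₗ[R] P') (x : Q ⊗[S] (S ⊗[R] P)),
      lTensor Q dd ((TensorProduct.AlgebraTensorModule.cancelBaseChange R S S Q P) x)
        = TensorProduct.AlgebraTensorModule.cancelBaseChange R S S Q P'
            (lTensor Q (dd.baseChange S) x) := by
    intro P P' _ _ _ _ dd x
    induction x using TensorProduct.induction_on with
    | zero => simp
    | tmul q t =>
      induction t using TensorProduct.induction_on with
      | zero => simp
      | tmul s p => simp
      | add t1 t2 h1 h2 =>
        rw [TensorProduct.tmul_add, map_add, map_add, h1, h2, ← map_add, ← map_add,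
          ← TensorProduct.tmul_add]
    | add x y hx hy => rw [map_add, map_add, hx, hy, ← map_add, ← map_add]
  exact exact_of_ladder'
    ⇑(TensorProduct.AlgebraTensorModule.cancelBaseChange R S S Q N1)
    ⇑(TensorProduct.AlgebraTensorModule.cancelBaseChange R S S Q N2)
    ⇑(TensorProduct.AlgebraTensorModule.cancelBaseChange R S S Q N3)
    (TensorProduct.AlgebraTensorModule.cancelBaseChange R S S Q N1).surjective
    (TensorProduct.AlgebraTensorModule.cancelBaseChange R S S Q N2).bijective
    (TensorProduct.AlgebraTensorModule.cancelBaseChange R S S Q N3).injective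
    (map_zero _) (fun x => key (P := N1) (P' := N2) d1 x)
    (fun x => key (P := N2) (P' := N3) d2 x) hQ

lemma directedSystem_rTensor {R : Type u} [CommRing R]
    {ι : Type u} [Preorder ι]
    (G : ι → Type u) [∀ i, AddCommGroup (G i)] [∀ i, Module R (G i)]
    (f : ∀ i j, i ≤ j → G i →ₗ[R] G j)
    [DirectedSystem G fun i j h => f i j h]
    (N : Type u) [AddCommGroup N] [Module R N] :
    DirectedSystem (fun i => G i ⊗[R] N) (fun i j h => rTensor N (f i j h)) := by
  constructor
  · intro i x
    have hfi : f i i le_rfl = LinearMap.id :=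
      LinearMap.ext fun y => Module.DirectedSystem.map_self f y
    rw [hfi, rTensor_id, LinearMap.id_apply]
  · intro k j i hij hjk x
    have hfc : f j k hjk ∘ₗ f i j hij = f i k (le_trans hij hjk) :=
      LinearMap.ext fun y => Module.DirectedSystem.map_map f hij hjk y
    rw [← LinearMap.comp_apply, ← rTensor_comp, hfc]

/-- Exactness passes to direct limits. -/
lemma exact_lTensor_directLimit {R : Type u} [CommRing R]
    {ι : Type u} [Preorder ι] [IsDirected ι (· ≤ ·)] [Nonempty ι] [DecidableEq ι]
    (G : ι → Type u) [∀ i, AddCommGroup (G i)] [∀ i, Module R (G i)]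
    (f : ∀ i j, i ≤ j → G i →ₗ[R] G j)
    [DirectedSystem G fun i j h => f i j h]
    {N1 N2 N3 : Type u} [AddCommGroup N1] [Module R N1] [AddCommGroup N2] [Module R N2]
    [AddCommGroup N3] [Module R N3]
    (d1 : N1 →ₗ[R] N2) (d2 : N2 →ₗ[R] N3) (hd : d2.comp d1 = 0)
    (h : ∀ i, Function.Exact (lTensor (G i) d1) (lTensor (G i) d2)) :
    Function.Exact (lTensor (Module.DirectLimit G f) d1)
      (lTensor (Module.DirectLimit G f) d2) := by
  classical
  haveI := directedSystem_rTensor G f N1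
  haveI := directedSystem_rTensor G f N2
  haveI := directedSystem_rTensor G f N3
  have hcomm : ∀ {P P' : Type u} [AddCommGroup P] [Module R P] [AddCommGroup P'] [Module R P']
      (dd : P →ₗ[R] P') (i j : ι) (hij : i ≤ j),
      lTensor (G j) dd ∘ₗ rTensor P (f i j hij) = rTensor P' (f i j hij) ∘ₗ lTensor (G i) dd := by
    intro P P' _ _ _ _ dd i j hij
    rw [lTensor_comp_rTensor, rTensor_comp_lTensor]
  set D1 := Module.DirectLimit.map (f := fun i j h => rTensor N1 (f i j h))
      (f' := fun i j h => rTensor N2 (f i j h))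
      (fun i => lTensor (G i) d1) (fun i j hij => hcomm d1 i j hij) with hD1
  set D2 := Module.DirectLimit.map (f := fun i j h => rTensor N2 (f i j h))
      (f' := fun i j h => rTensor N3 (f i j h))
      (fun i => lTensor (G i) d2) (fun i j hij => hcomm d2 i j hij) with hD2
  have hD : Function.Exact D1 D2 := by
    intro y
    constructor
    · intro hy
      obtain ⟨i, x, rfl⟩ := Module.DirectLimit.exists_of y
      rw [hD2, Module.DirectLimit.map_apply_of] at hy
      obtain ⟨i2, hi2, hx2⟩ := Module.DirectLimit.of.zero_exact hy
      have hx2' : lTensor (G i2) d2 (rTensor N2 (f i i2 hi2) x) = 0 := by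
        rw [← LinearMap.comp_apply, hcomm d2 i i2 hi2, LinearMap.comp_apply, hx2]
      obtain ⟨w, hw⟩ := (h i2 _).mp hx2'
      refine ⟨Module.DirectLimit.of R ι _ _ i2 w, ?_⟩
      rw [hD1, Module.DirectLimit.map_apply_of, hw, Module.DirectLimit.of_f]
    · rintro ⟨z, rfl⟩
      induction z using Module.DirectLimit.induction_on with
      | ih i x =>
        rw [hD1, hD2, Module.DirectLimit.map_apply_of, Module.DirectLimit.map_apply_of]
        have hz : lTensor (G i) d2 (lTensor (G i) d1 x) = 0 := by
          rw [← LinearMap.comp_apply, ← lTensor_comp, hd, lTensor_zero, LinearMap.zero_apply]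
        rw [hz, map_zero]
  have key : ∀ {P P' : Type u} [AddCommGroup P] [Module R P] [AddCommGroup P'] [Module R P']
      (dd : P →ₗ[R] P')
      (hc : ∀ i j (h : i ≤ j), lTensor (G j) dd ∘ₗ rTensor P (f i j h)
          = rTensor P' (f i j h) ∘ₗ lTensor (G i) dd)
      (x : Module.DirectLimit (fun i => G i ⊗[R] P) (fun i j h => rTensor P (f i j h))),
      lTensor (Module.DirectLimit G f) dd ((TensorProduct.directLimitLeft f P).symm x)
        = (TensorProduct.directLimitLeft f P').symm
            (Module.DirectLimit.map (fun i => lTensor (G i) dd) hc x) := by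
    intro P P' _ _ _ _ dd hc x
    induction x using Module.DirectLimit.induction_on with
    | ih i t =>
      induction t using TensorProduct.induction_on with
      | zero => rw [map_zero, map_zero, map_zero, map_zero, map_zero]
      | tmul g m =>
        rw [Module.DirectLimit.map_apply_of, TensorProduct.directLimitLeft_symm_of_tmul,
          lTensor_tmul, lTensor_tmul, TensorProduct.directLimitLeft_symm_of_tmul]
      | add t1 t2 h1 h2 =>
        rw [map_add (Module.DirectLimit.of R ι _ _ i), map_add, map_add, map_add, map_add, h1, h2]
  exact exact_of_ladder'
    ⇑(TensorProduct.directLimitLeft f N1).symm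
    ⇑(TensorProduct.directLimitLeft f N2).symm
    ⇑(TensorProduct.directLimitLeft f N3).symm
    (TensorProduct.directLimitLeft f N1).symm.surjective
    (TensorProduct.directLimitLeft f N2).symm.bijective
    (TensorProduct.directLimitLeft f N3).symm.injective
    (map_zero _) (fun x => key (P := N1) (P' := N2) d1 _ x)
    (fun x => key (P := N2) (P' := N3) d2 _ x) hD

end Helpers

theorem acyclic_of_tensor_directLimit_filtered_flat
    {R : Type u} [CommRing R] [IsNoetherianRing R] (P : Ideal R) (hP : P.IsPrime)
    -- the finite free complex
    (n : ℕ) (b : ℕ → ℕ)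
    (d : ∀ k : ℕ, ((Fin (b (k + 1)) → R) →ₗ[R] (Fin (b k) → R)))
    (hdd : ∀ k, (d k).comp (d (k + 1)) = 0)
    (hfin : ∀ k, n ≤ k → d k = 0)
    -- A ⊗ G_• acyclic
    (hacyclic : ∀ j : ℕ,
      Function.Exact (LinearMap.lTensor (R ⧸ P) (d (j + 1)))
        (LinearMap.lTensor (R ⧸ P) (d j)))
    -- the directed system whose limit is H
    (ι : Type u) [Preorder ι] [IsDirected ι (· ≤ ·)] [Nonempty ι] [DecidableEq ι]
    (G : ι → Type u) [∀ i, AddCommGroup (G i)] [∀ i, Module R (G i)]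
    (f : ∀ i j, i ≤ j → G i →ₗ[R] G j)
    [DirectedSystem G fun i j h => f i j h]
    -- each `G i` has a finite filtration with `A`-flat factors
    (hfilt : ∀ i : ι, ∃ (m : ℕ) (F : ℕ → Submodule R (G i)),
      F 0 = ⊥ ∧ (∀ k, F k ≤ F (k + 1)) ∧ F m = ⊤ ∧
      ∀ k < m, ∃ Q : ModuleCat.{u} (R ⧸ P), Module.Flat (R ⧸ P) Q ∧
        Nonempty ((↥(F (k + 1)) ⧸ Submodule.comap (F (k + 1)).subtype (F k))
          ≃ₗ[R] RestrictScalars R (R ⧸ P) Q))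
    (H : Type u) [AddCommGroup H] [Module R H]
    (e : Module.DirectLimit G f ≃ₗ[R] H) :
    ∀ j : ℕ,
      Function.Exact (LinearMap.lTensor H (d (j + 1))) (LinearMap.lTensor H (d j)) := by
  classical
  have hlevel : ∀ i : ι, ∀ j : ℕ,
      Function.Exact (lTensor (G i) (d (j + 1))) (lTensor (G i) (d j)) := by
    intro i
    obtain ⟨m, F, hF0, hle, hFm, hfac⟩ := hfilt i
    have key : ∀ k, k ≤ m → ∀ j,
        Function.Exact (lTensor ↥(F k) (d (j + 1))) (lTensor ↥(F k) (d j)) := by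
      intro k
      induction k with
      | zero =>
        intro _ j
        haveI : Subsingleton ↥(F 0) := by rw [hF0]; infer_instance
        exact exact_lTensor_of_subsingleton (d (j + 1)) (d j)
      | succ k ih =>
        intro hk1 j
        have hk : k < m := Nat.lt_of_lt_of_le (Nat.lt_succ_self k) hk1
        obtain ⟨Q, hQflat, ⟨eq⟩⟩ := hfac k hk
        letI : Module (R ⧸ P) (RestrictScalars R (R ⧸ P) Q) :=
          RestrictScalars.moduleOrig R (R ⧸ P) Q
        haveI : Module.Flat (R ⧸ P) (RestrictScalars R (R ⧸ P) Q) := hQflat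
        haveI : IsScalarTower R (R ⧸ P) (RestrictScalars R (R ⧸ P) Q) :=
          RestrictScalars.isScalarTower R (R ⧸ P) Q
        have hquot : ∀ j' : ℕ,
            Function.Exact
              (lTensor ((↥(F (k + 1)) ⧸ Submodule.comap (F (k + 1)).subtype (F k))) (d (j' + 1)))
              (lTensor ((↥(F (k + 1)) ⧸ Submodule.comap (F (k + 1)).subtype (F k))) (d j')) :=
          fun j' => by
            have h1 := @exact_lTensor_of_flat_alg R (R ⧸ P) _ _ _
              (RestrictScalars R (R ⧸ P) Q) inferInstance (RestrictScalars.moduleOrig R (R ⧸ P) Q)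
              (RestrictScalars.module R (R ⧸ P) Q) (RestrictScalars.isScalarTower R (R ⧸ P) Q)
              hQflat _ _ _ _ _ _ _ _ _ _ _ (hacyclic j')
            exact @exact_lTensor_congr R _ _ _ _ _ _ _ (RestrictScalars.module R (R ⧸ P) Q)
              _ _ _ _ _ _ _ _ eq.symm _ _ h1
        have hsubN : ∀ j' : ℕ,
            Function.Exact
              (lTensor ↥(Submodule.comap (F (k + 1)).subtype (F k)) (d (j' + 1)))
              (lTensor ↥(Submodule.comap (F (k + 1)).subtype (F k)) (d j')) :=
          fun j' => exact_lTensor_congr (Submodule.comapSubtypeEquivOfLe (hle k)).symm _ _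
            (ih (le_of_lt hk) j')
        exact exact_lTensor_of_ses (Submodule.comap (F (k + 1)).subtype (F k))
          (d (j + 1)) (d j) (hdd j) (hsubN j) (hquot j)
    intro j
    exact exact_lTensor_congr (LinearEquiv.ofTop (F m) hFm) _ _ (key m le_rfl j)
  intro j
  exact exact_lTensor_congr e _ _
    (exact_lTensor_directLimit G f (d (j + 1)) (d j) (hdd j) (fun i => hlevel i j))
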